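/- Theorem 1 (graph-level subgraph representation). For every subset S ⊆ V there exists an assignment of mask values m_v^(k) ∈ [0,1] (v ∈ V, k ∈ {1,…,K}) such that Σ_{v ∈ V} h_v^(K) = Σ_{v ∈ S} t_v^(K); that is, the SUM readout of the K-layer soft-mask GNN on G with these masks equals the SUM readout of the K-layer GNN run on the induced subgraph G_S with all masks equal to 1. -/

import Mathlib

open Finset

/-- Componentwise ReLU on real vectors. -/
noncomputable def relu {ι : Type*} (x : ι → ℝ) : ι → ℝ := fun i => max (x i) 0

/-- The soft-mask GNN (SMG) recursion on a graph `G`: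
`h_v^(0) = x_v` and
`h_v^(k) = ReLU( m_v^(k) • ( W₁^(k) h_v^(k-1) + Σ_{u ∈ N_G(v)} m_u^(k) • W₂^(k) h_u^(k-1) ) )`. -/
noncomputable def smg {V : Type*} [Fintype V] [DecidableEq V] {d : ℕ}
    (G : SimpleGraph V) [DecidableRel G.Adj]
    (x : V → Fin d → ℝ) (W1 W2 : ℕ → Matrix (Fin d) (Fin d) ℝ)
    (m : ℕ → V → ℝ) : ℕ → V → Fin d → ℝ
  | 0 => x
  | k + 1 => fun v =>
      relu (m (k + 1) v •
        ((W1 (k + 1)).mulVec (smg G x W1 W2 m k v) +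
          ∑ u ∈ G.neighborFinset v, m (k + 1) u • (W2 (k + 1)).mulVec (smg G x W1 W2 m k u)))

/-- The same recursion run on the induced subgraph `G_S` with all masks equal to `1`:
`t_v^(0) = x_v` and
`t_v^(k) = ReLU( W₁^(k) t_v^(k-1) + Σ_{u ∈ N_{G_S}(v)} W₂^(k) t_u^(k-1) )`,
where for `v ∈ S` the neighborhood of `v` in `G_S` is `{u ∈ N_G(v) : u ∈ S}`. -/
noncomputable def smgSub {V : Type*} [Fintype V] [DecidableEq V] {d : ℕ}
    (G : SimpleGraph V) [DecidableRel G.Adj] (S : Finset V)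
    (x : V → Fin d → ℝ) (W1 W2 : ℕ → Matrix (Fin d) (Fin d) ℝ) : ℕ → V → Fin d → ℝ
  | 0 => x
  | k + 1 => fun v =>
      relu ((W1 (k + 1)).mulVec (smgSub G S x W1 W2 k v) +
          ∑ u ∈ (G.neighborFinset v).filter (· ∈ S),
            (W2 (k + 1)).mulVec (smgSub G S x W1 W2 k u))

/-- **Theorem 1** (graph-level subgraph representation): for every subset `S ⊆ V` there is
a mask assignment with values in `[0,1]` such that the SUM readout of the `K`-layer
soft-mask GNN on `G` equals the SUM readout of the `K`-layer GNN run on `G_S` with all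
masks equal to `1`. -/
theorem theorem1_graph_level_subgraph_representation
    {V : Type*} [Fintype V] [DecidableEq V] {d K : ℕ} (hd : 1 ≤ d) (hK : 1 ≤ K)
    (G : SimpleGraph V) [DecidableRel G.Adj]
    (x : V → Fin d → ℝ) (W1 W2 : ℕ → Matrix (Fin d) (Fin d) ℝ)
    (S : Finset V) :
    ∃ m : ℕ → V → ℝ,
      (∀ k v, 1 ≤ k → k ≤ K → 0 ≤ m k v ∧ m k v ≤ 1) ∧
      ∑ v, smg G x W1 W2 m K v = ∑ v ∈ S, smgSub G S x W1 W2 K v := by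

  classical
  set m : ℕ → V → ℝ := fun _ v => if v ∈ S then 1 else 0 with hm
  refine ⟨m, fun k v _ _ => by by_cases h : v ∈ S <;> simp [hm, h], ?_⟩
  have key : ∀ k, ∀ v ∈ S, smg G x W1 W2 m k v = smgSub G S x W1 W2 k v := by
    intro k
    induction k with
    | zero => intro v _; rfl
    | succ k ih =>
      intro v hv
      show relu _ = relu _
      congr 1
      have hmv : m (k+1) v = 1 := by simp [hm, hv]
      rw [hmv, one_smul, ih v hv]
      congr 1
      rw [← Finset.sum_filter_add_sum_filter_not (G.neighborFinset v) (· ∈ S)]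
      have h2 : ∑ u ∈ (G.neighborFinset v).filter (fun u => ¬ u ∈ S),
          m (k+1) u • (W2 (k+1)).mulVec (smg G x W1 W2 m k u) = 0 := by
        apply Finset.sum_eq_zero
        intro u hu
        rw [Finset.mem_filter] at hu
        simp [hm, hu.2]
      rw [h2, add_zero]
      have h3 : ∑ u ∈ (G.neighborFinset v).filter (· ∈ S),
          m (k+1) u • (W2 (k+1)).mulVec (smg G x W1 W2 m k u)
          = ∑ u ∈ (G.neighborFinset v).filter (· ∈ S),
            (W2 (k+1)).mulVec (smgSub G S x W1 W2 k u) := by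
        apply Finset.sum_congr rfl
        intro u hu
        rw [Finset.mem_filter] at hu
        rw [ih u hu.2]; simp [hm, hu.2]
      rw [h3]
  have hzero : ∀ v, v ∉ S → smg G x W1 W2 m K v = 0 := by
    intro v hv
    obtain ⟨K', rfl⟩ : ∃ K', K = K' + 1 := ⟨K - 1, (Nat.succ_pred_eq_of_pos hK).symm⟩
    show relu _ = 0
    have hmv : m (K'+1) v = 0 := by simp [hm, hv]
    rw [hmv, zero_smul]
    funext i
    simp [relu]
  rw [← Finset.sum_subset (Finset.subset_univ S) (fun v _ hv => hzero v hv)]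
  exact Finset.sum_congr rfl (fun v hv => key K v hv)
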